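/- Let C ⊆ S^{n−1} be a finite code, m a positive integer, and u_0 < u_1 < … < u_m points partitioning [u_0, s_max] into m equal segments U_i = [u_i, u_{i+1}], where s_max = max_{c≠c'} ⟨c,c'⟩ and u_0 < s_max < 1. Suppose f(x) = Σ_{k=0}^l f_k P_k^{λ,λ}(x) satisfies f_k ≥ 0 for 1 ≤ k ≤ l, f(x) ≤ 0 on [−1, u_0], and f(x) ≥ 0 on [u_0, 1], and that f_0·|C| − f(1) > 0. Then there exists 0 ≤ i ≤ m−1 and a point s ∈ U_i with a(u_i, u_{i+1}) ≥ (f_0·|C| − f(1))/(m·f(s)), where a(s,t) = (1/|C|)·#{(c,c') ∈ C², c≠c' : s ≤ ⟨c,c'⟩ ≤ t}. -/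

import Mathlib

open Finset
open scoped Classical

/-- Distance density of a spherical code: normalized number of ordered pairs of
distinct codewords with inner product in `[s,t]`. -/
noncomputable def distDensity (n : ℕ) (C : Finset (EuclideanSpace ℝ (Fin n)))
    (s t : ℝ) : ℝ :=
  (((C ×ˢ C).filter (fun pc => pc.1 ≠ pc.2 ∧
      s ≤ (inner ℝ pc.1 pc.2 : ℝ) ∧ (inner ℝ pc.1 pc.2 : ℝ) ≤ t)).card : ℝ) / (C.card : ℝ)

lemma cover_aux (m : ℕ) (hm : 0 < m) (u0 d t : ℝ) (hd : 0 < d)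
    (h1 : u0 ≤ t) (h2 : t ≤ u0 + d) :
    ∃ i : ℕ, i < m ∧ u0 + i * d / m ≤ t ∧ t ≤ u0 + (i + 1) * d / m := by
  have hmR : (0:ℝ) < m := by exact_mod_cast hm
  set x : ℝ := (t - u0) * m / d with hx
  have hx0 : 0 ≤ x := div_nonneg (mul_nonneg (sub_nonneg.2 h1) hmR.le) hd.le
  have hxd : x * d / m = t - u0 := by
    rw [hx]; field_simp
  refine ⟨min (m - 1) ⌊x⌋₊, lt_of_le_of_lt (min_le_left _ _) (Nat.sub_lt hm one_pos), ?_, ?_⟩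
  · have hix : ((min (m - 1) ⌊x⌋₊ : ℕ) : ℝ) ≤ x :=
      le_trans (by exact_mod_cast Nat.min_le_right (m-1) ⌊x⌋₊ |> Nat.cast_le.2) (Nat.floor_le hx0)
    have : ((min (m - 1) ⌊x⌋₊ : ℕ) : ℝ) * d / m ≤ x * d / m := by gcongr
    linarith [hxd ▸ this]
  · rcases le_or_gt (⌊x⌋₊) (m - 1) with h | h
    · have hie : min (m - 1) ⌊x⌋₊ = ⌊x⌋₊ := min_eq_right h
      have hxi : x ≤ ((⌊x⌋₊ : ℕ) : ℝ) + 1 := (Nat.lt_floor_add_one x).le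
      have : x * d / m ≤ (((⌊x⌋₊ : ℕ) : ℝ) + 1) * d / m := by gcongr
      rw [hie]
      linarith [hxd ▸ this]
    · have hie : min (m - 1) ⌊x⌋₊ = m - 1 := min_eq_left h.le
      have hcast : ((min (m - 1) ⌊x⌋₊ : ℕ) : ℝ) + 1 = m := by
        rw [hie]
        have : (m - 1) + 1 = m := Nat.succ_pred_eq_of_pos hm
        exact_mod_cast congrArg (Nat.cast : ℕ → ℝ) this
      rw [hcast]
      have : (m : ℝ) * d / m = d := by field_simp
      linarith

/-- Lower bound on the distance density of spherical codes (Theorem 2):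
on some segment `U_i = [u_i, u_{i+1}]` of the equipartition of `[u_0, s_max]`
there is a point `s` with `a(u_i,u_{i+1}) ≥ (f_0|C| − f(1))/(m f(s))`. -/
theorem stmt16 (n l m : ℕ) (hm : 0 < m)
    (C : Finset (EuclideanSpace ℝ (Fin n))) (hunit : ∀ c ∈ C, ‖c‖ = 1)
    (smax u0 : ℝ)
    (hsmax : IsGreatest {t : ℝ | ∃ c ∈ C, ∃ c' ∈ C, c ≠ c' ∧ (inner ℝ c c' : ℝ) = t} smax)
    (hu0 : u0 < smax) (hs1 : smax < 1)
    (P : ℕ → ℝ → ℝ) (hP0 : ∀ t, P 0 t = 1)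
    (hposdef : ∀ k, 0 ≤ ∑ c ∈ C, ∑ c' ∈ C, P k (inner ℝ c c' : ℝ))
    (fc : ℕ → ℝ) (hfc : ∀ k, 1 ≤ k → k ≤ l → 0 ≤ fc k)
    (f : ℝ → ℝ) (hf : ∀ t, f t = ∑ k ∈ Finset.range (l + 1), fc k * P k t)
    (hfneg : ∀ t, -1 ≤ t → t ≤ u0 → f t ≤ 0)
    (hfpos : ∀ t, u0 ≤ t → t ≤ 1 → 0 ≤ f t)
    (hmain : 0 < fc 0 * (C.card : ℝ) - f 1) :
    ∃ i : ℕ, i < m ∧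
      ∃ s ∈ Set.Icc (u0 + i * (smax - u0) / m) (u0 + (i + 1) * (smax - u0) / m),
        distDensity n C (u0 + i * (smax - u0) / m) (u0 + (i + 1) * (smax - u0) / m)
          ≥ (fc 0 * (C.card : ℝ) - f 1) / (m * f s) := by
  classical
  have hmR : (0:ℝ) < m := by exact_mod_cast hm
  obtain ⟨c0, hc0, c0', hc0', hne0, _⟩ := hsmax.1
  have hcard : (0:ℝ) < (C.card : ℝ) := by
    have : 0 < C.card := Finset.card_pos.2 ⟨c0, hc0⟩
    exact_mod_cast this
  set B : ℝ := fc 0 * (C.card : ℝ) - f 1 with hB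
  set d : ℝ := smax - u0 with hd
  have hdpos : 0 < d := sub_pos.2 hu0
  set u : ℕ → ℝ := fun i => u0 + i * d / m with hu
  set ip : EuclideanSpace ℝ (Fin n) × EuclideanSpace ℝ (Fin n) → ℝ :=
    fun p => (inner ℝ p.1 p.2 : ℝ) with hip
  -- basic facts about inner products
  have hipself : ∀ c ∈ C, (inner ℝ c c : ℝ) = 1 := by
    intro c hc
    rw [real_inner_self_eq_norm_mul_norm, hunit c hc, mul_one]
  have hipbound : ∀ c ∈ C, ∀ c' ∈ C, -1 ≤ (inner ℝ c c' : ℝ) := by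
    intro c hc c' hc'
    have := abs_real_inner_le_norm c c'
    rw [hunit c hc, hunit c' hc', mul_one] at this
    linarith [neg_abs_le ((inner ℝ c c' : ℝ))]
  have hf1 : 0 ≤ f 1 := hfpos 1 (by linarith) le_rfl
  -- Step 1: full sum bound
  have hSfull : fc 0 * (C.card : ℝ) ^ 2 ≤ ∑ c ∈ C, ∑ c' ∈ C, f (inner ℝ c c' : ℝ) := by
    have heq : ∑ c ∈ C, ∑ c' ∈ C, f (inner ℝ c c' : ℝ)
        = ∑ k ∈ Finset.range (l + 1), fc k * ∑ c ∈ C, ∑ c' ∈ C, P k (inner ℝ c c' : ℝ) := by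
      simp_rw [hf]
      calc ∑ c ∈ C, ∑ c' ∈ C, ∑ k ∈ Finset.range (l+1), fc k * P k (inner ℝ c c' : ℝ)
          = ∑ c ∈ C, ∑ k ∈ Finset.range (l+1), ∑ c' ∈ C, fc k * P k (inner ℝ c c' : ℝ) :=
            Finset.sum_congr rfl fun c _ => Finset.sum_comm
        _ = ∑ k ∈ Finset.range (l+1), ∑ c ∈ C, ∑ c' ∈ C, fc k * P k (inner ℝ c c' : ℝ) :=
            Finset.sum_comm
        _ = ∑ k ∈ Finset.range (l+1), fc k * ∑ c ∈ C, ∑ c' ∈ C, P k (inner ℝ c c' : ℝ) := by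
            simp_rw [Finset.mul_sum]
    rw [heq, Finset.sum_range_succ']
    have h0 : fc 0 * ∑ c ∈ C, ∑ c' ∈ C, P 0 (inner ℝ c c' : ℝ) = fc 0 * (C.card : ℝ) ^ 2 := by
      simp [hP0, sq]
    rw [h0]
    have : 0 ≤ ∑ k ∈ Finset.range l, fc (k + 1) * ∑ c ∈ C, ∑ c' ∈ C, P (k+1) (inner ℝ c c' : ℝ) := by
      apply Finset.sum_nonneg
      intro k hk
      exact mul_nonneg (hfc (k+1) (Nat.le_add_left 1 k) (Finset.mem_range.1 hk)) (hposdef (k+1))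
    linarith
  -- the set of distinct pairs
  set S := (C ×ˢ C).filter (fun p => p.1 ≠ p.2) with hS
  have hmemS : ∀ p ∈ S, p.1 ∈ C ∧ p.2 ∈ C ∧ p.1 ≠ p.2 := by
    intro p hp
    simp only [hS, Finset.mem_filter, Finset.mem_product] at hp
    exact ⟨hp.1.1, hp.1.2, hp.2⟩
  have hipS : ∀ p ∈ S, -1 ≤ ip p ∧ ip p ≤ smax := by
    intro p hp
    obtain ⟨h1, h2, h3⟩ := hmemS p hp
    exact ⟨hipbound _ h1 _ h2, hsmax.2 ⟨p.1, h1, p.2, h2, h3, rfl⟩⟩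
  -- Step 2: sum over distinct pairs
  have hSsum : (C.card : ℝ) * B ≤ ∑ p ∈ S, f (ip p) := by
    have hsplit : ∑ p ∈ C ×ˢ C, f (ip p)
        = ∑ p ∈ S, f (ip p) + ∑ p ∈ (C ×ˢ C).filter (fun p => ¬ p.1 ≠ p.2), f (ip p) :=
      (Finset.sum_filter_add_sum_filter_not _ _ _).symm
    have hfull : ∑ p ∈ C ×ˢ C, f (ip p) = ∑ c ∈ C, ∑ c' ∈ C, f (inner ℝ c c' : ℝ) := by
      rw [Finset.sum_product]
    -- diagonal sum
    have hdiag : ∑ p ∈ (C ×ˢ C).filter (fun p => ¬ p.1 ≠ p.2), f (ip p)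
        ≤ (C.card : ℝ) * f 1 := by
      have hval : ∀ p ∈ (C ×ˢ C).filter (fun p => ¬ p.1 ≠ p.2), f (ip p) = f 1 := by
        intro p hp
        simp only [Finset.mem_filter, Finset.mem_product, not_not] at hp
        have : ip p = 1 := by
          simp only [hip]
          rw [hp.2]
          exact hipself _ hp.1.2
        rw [this]
      rw [Finset.sum_congr rfl hval, Finset.sum_const, nsmul_eq_mul]
      have hcle : ((C ×ˢ C).filter (fun p => ¬ p.1 ≠ p.2)).card ≤ C.card := by
        apply Finset.card_le_card_of_injOn (fun p => p.1)
        · intro p hp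
          simp only [Finset.mem_coe, Finset.mem_filter, Finset.mem_product] at hp
          exact hp.1.1
        · intro p hp q hq hpq
          simp only [Finset.mem_coe, Finset.mem_filter, not_not] at hp hq
          have h2 : p.2 = q.2 := by rw [← hp.2, ← hq.2]; exact hpq
          exact Prod.ext_iff.2 ⟨hpq, h2⟩
      have : (((C ×ˢ C).filter (fun p => ¬ p.1 ≠ p.2)).card : ℝ) ≤ (C.card : ℝ) := by
        exact_mod_cast hcle
      nlinarith
    have : fc 0 * (C.card : ℝ) ^ 2 ≤ ∑ p ∈ S, f (ip p) + (C.card : ℝ) * f 1 := by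
      calc fc 0 * (C.card : ℝ) ^ 2 ≤ ∑ c ∈ C, ∑ c' ∈ C, f (inner ℝ c c' : ℝ) := hSfull
        _ = ∑ p ∈ S, f (ip p) + ∑ p ∈ (C ×ˢ C).filter (fun p => ¬ p.1 ≠ p.2), f (ip p) := by
            rw [← hfull]; exact hsplit
        _ ≤ _ := by linarith
    simp only [hB]
    nlinarith
  -- Step 3: restrict to pairs with ip ≥ u0
  have hSmid : (C.card : ℝ) * B ≤ ∑ p ∈ S.filter (fun p => u0 ≤ ip p), f (ip p) := by
    have hsplit := Finset.sum_filter_add_sum_filter_not S (fun p => u0 ≤ ip p) (fun p => f (ip p))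
    have hneg : ∑ p ∈ S.filter (fun p => ¬ u0 ≤ ip p), f (ip p) ≤ 0 := by
      apply Finset.sum_nonpos
      intro p hp
      simp only [Finset.mem_filter, not_le] at hp
      exact hfneg _ (hipS p hp.1).1 hp.2.le
    linarith
  -- Step 4: the segment sums
  set T : ℕ → Finset _ := fun i => S.filter (fun p => u i ≤ ip p ∧ ip p ≤ u (i+1)) with hT
  have huge : ∀ i : ℕ, u0 ≤ u i := by
    intro i
    simp only [hu]
    have : 0 ≤ (i : ℝ) * d / m := by positivity
    linarith
  have hule : ∀ i : ℕ, i + 1 ≤ m → u (i+1) ≤ smax := by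
    intro i hi
    simp only [hu]
    have : ((i:ℝ)+1) * d / m ≤ (m:ℝ) * d / m := by
      gcongr
      exact_mod_cast hi
    have h2 : (m:ℝ) * d / m = d := by field_simp
    push_cast
    rw [hd] at *
    nlinarith [h2 ▸ this]
  have hfposT : ∀ i : ℕ, i < m → ∀ p ∈ T i, 0 ≤ f (ip p) := by
    intro i hi p hp
    simp only [hT, Finset.mem_filter] at hp
    have h1 : u0 ≤ ip p := le_trans (huge i) hp.2.1
    have h2 : ip p ≤ 1 := le_trans hp.2.2 (le_trans (hule i hi) hs1.le)
    exact hfpos _ h1 h2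
  have hstep4 : ∑ p ∈ S.filter (fun p => u0 ≤ ip p), f (ip p)
      ≤ ∑ i ∈ Finset.range m, ∑ p ∈ T i, f (ip p) := by
    have hpoint : ∀ p ∈ S.filter (fun p => u0 ≤ ip p),
        f (ip p) ≤ ∑ i ∈ Finset.range m,
          (if u i ≤ ip p ∧ ip p ≤ u (i+1) then f (ip p) else 0) := by
      intro p hp
      simp only [Finset.mem_filter] at hp
      have hle : ip p ≤ u0 + d := by
        have := (hipS p hp.1).2
        simp only [hd]; linarith
      obtain ⟨i0, hi0m, hi01, hi02⟩ := cover_aux m hm u0 d (ip p) hdpos hp.2 hle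
      have hfp : 0 ≤ f (ip p) :=
        hfpos _ hp.2 (by linarith [(hipS p hp.1).2])
      have hterm : ∀ j ∈ Finset.range m,
          0 ≤ (if u j ≤ ip p ∧ ip p ≤ u (j+1) then f (ip p) else 0) := by
        intro j _
        split
        · exact hfp
        · exact le_rfl
      have := Finset.single_le_sum (f := fun i =>
          (if u i ≤ ip p ∧ ip p ≤ u (i+1) then f (ip p) else 0))
        hterm (Finset.mem_range.2 hi0m)
      simpa [hu, if_pos (And.intro hi01 hi02)] using this
    calc ∑ p ∈ S.filter (fun p => u0 ≤ ip p), f (ip p)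
        ≤ ∑ p ∈ S.filter (fun p => u0 ≤ ip p), ∑ i ∈ Finset.range m,
            (if u i ≤ ip p ∧ ip p ≤ u (i+1) then f (ip p) else 0) :=
          Finset.sum_le_sum hpoint
      _ = ∑ i ∈ Finset.range m, ∑ p ∈ S.filter (fun p => u0 ≤ ip p),
            (if u i ≤ ip p ∧ ip p ≤ u (i+1) then f (ip p) else 0) := Finset.sum_comm
      _ ≤ ∑ i ∈ Finset.range m, ∑ p ∈ T i, f (ip p) := by
          apply Finset.sum_le_sum
          intro i hi
          rw [Finset.sum_ite, Finset.sum_const_zero, add_zero, Finset.filter_filter]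
          apply Finset.sum_le_sum_of_subset_of_nonneg
          · intro p hp
            rw [Finset.mem_filter] at hp
            simp only [hT, Finset.mem_filter]
            exact ⟨hp.1, hp.2.2⟩
          · intro p hp _
            exact hfposT i (Finset.mem_range.1 hi) p hp
  -- Step 5: pigeonhole
  have hpig : ∃ i ∈ Finset.range m, (C.card : ℝ) * B / m ≤ ∑ p ∈ T i, f (ip p) := by
    by_contra h
    push_neg at h
    have : ∑ i ∈ Finset.range m, ∑ p ∈ T i, f (ip p)
        < ∑ i ∈ Finset.range m, (C.card : ℝ) * B / m := by
      apply Finset.sum_lt_sum_of_nonempty ⟨0, Finset.mem_range.2 hm⟩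
      intro i hi
      exact h i hi
    rw [Finset.sum_const, Finset.card_range, nsmul_eq_mul] at this
    have heq : (m:ℝ) * ((C.card : ℝ) * B / m) = (C.card : ℝ) * B := by field_simp
    rw [heq] at this
    linarith
  obtain ⟨i, hiR, hgi⟩ := hpig
  have him : i < m := Finset.mem_range.1 hiR
  have hBpos : 0 < (C.card : ℝ) * B / m := div_pos (mul_pos hcard hmain) hmR
  -- T i is nonempty
  have hTne : (T i).Nonempty := by
    rcases Finset.eq_empty_or_nonempty (T i) with h | h
    · rw [h, Finset.sum_empty] at hgi; linarith
    · exact h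
  -- maximizer
  obtain ⟨p0, hp0, hp0max⟩ := Finset.exists_max_image (T i) (fun p => f (ip p)) hTne
  set s : ℝ := ip p0 with hs
  have hsmem : u i ≤ s ∧ s ≤ u (i+1) := by
    simp only [hT, Finset.mem_filter] at hp0
    exact hp0.2
  have hN : ∑ p ∈ T i, f (ip p) ≤ ((T i).card : ℝ) * f s := by
    calc ∑ p ∈ T i, f (ip p) ≤ ∑ p ∈ T i, f s := Finset.sum_le_sum (fun p hp => hp0max p hp)
      _ = ((T i).card : ℝ) * f s := by rw [Finset.sum_const, nsmul_eq_mul]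
  have hNfs : (C.card : ℝ) * B / m ≤ ((T i).card : ℝ) * f s := le_trans hgi hN
  have hfs : 0 < f s := by
    by_contra h
    push_neg at h
    have : ((T i).card : ℝ) * f s ≤ 0 := mul_nonpos_of_nonneg_of_nonpos (Nat.cast_nonneg _) h
    linarith
  refine ⟨i, him, s, ⟨?_, ?_⟩, ?_⟩
  · simpa [hu, hd] using hsmem.1
  · have := hsmem.2
    simp only [hu, hd] at this
    push_cast at this ⊢
    convert this using 3
  · -- the density inequality
    have hTeq : (C ×ˢ C).filter (fun pc => pc.1 ≠ pc.2 ∧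
        u0 + i * (smax - u0) / m ≤ (inner ℝ pc.1 pc.2 : ℝ) ∧
        (inner ℝ pc.1 pc.2 : ℝ) ≤ u0 + (i + 1) * (smax - u0) / m) = T i := by
      simp only [hT, hS, Finset.filter_filter]
      apply Finset.filter_congr
      intro p hp
      simp only [hu, hd, hip]
      constructor
      · rintro ⟨h1, h2, h3⟩
        refine ⟨h1, h2, ?_⟩
        convert h3 using 2
        push_cast; ring
      · rintro ⟨h1, h2, h3⟩
        refine ⟨h1, h2, ?_⟩
        convert h3 using 2
        push_cast; ring
    rw [ge_iff_le, distDensity, hTeq]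
    rw [div_le_div_iff₀ (by positivity) hcard]
    have hm' : (C.card : ℝ) * B ≤ (m:ℝ) * (((T i).card : ℝ) * f s) := by
      rw [div_le_iff₀ hmR] at hNfs
      linarith [hNfs]
    nlinarith [hm']
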